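/- Let P = e_1…e_k be a path given by its arc sequence. Then the family of intervals {[i, s̄(i)] : 1 ≤ i ≤ k} is laminar, and likewise the family {[s̲(i), i] : 1 ≤ i ≤ k} is laminar: any two intervals in the family are either disjoint or one contains the other. -/
import Mathlib


open Finset

namespace EV

noncomputable section

/-- Charge after traversing `i` arcs of a path with arc gains `g`, battery capacity `B`,
initial charge `b`. -/
def charge (B b : ℝ) (g : ℕ → ℝ) : ℕ → ℝ
  | 0 => b
  | i + 1 => min (charge B b g i + g i) B

/-- The traversal of the path with `n` arcs is feasible from initial charge `b`. -/
def Feasible (B b : ℝ) (g : ℕ → ℝ) (n : ℕ) : Prop :=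
  ∀ i < n, 0 ≤ charge B b g i + g i

open Classical in
/-- Maximum final charge `α_b(P)` for a path `P` with `n` arc gains `g`,
as an extended real (`⊥ = -∞` if the traversal is infeasible). -/
def alpha (B b : ℝ) (g : ℕ → ℝ) (n : ℕ) : EReal :=
  if Feasible B b g n then ((charge B b g n : ℝ) : EReal) else ⊥

/-- Gain of the `i`-th vertex (0-indexed): the sum of the first `i` arc gains. -/
def vGain (g : ℕ → ℝ) (i : ℕ) : ℝ := ∑ t ∈ Finset.range i, g t

/-- `P` is traversable: `α_B(P) ≥ 0`, i.e. feasible from a full battery. -/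
def Traversable (B : ℝ) (g : ℕ → ℝ) (n : ℕ) : Prop := Feasible B B g n

/-- `C` is a charge drop schedule for a path with `n` arcs (vertices `0,…,n`):
no drop at the first vertex, all drops nonnegative. -/
def Schedule (C : ℕ → ℝ) (n : ℕ) : Prop := C 0 = 0 ∧ ∀ i ≤ n, 0 ≤ C i

/-- Gain of vertex `i` with respect to the charge drop schedule `C`. -/
def cGain (g C : ℕ → ℝ) (i : ℕ) : ℝ := vGain g i - ∑ t ∈ Finset.range (i + 1), C t

/-- `P` (with `n` arcs) is ascending with respect to the schedule `C`. -/
def AscendingC (B : ℝ) (g C : ℕ → ℝ) (n : ℕ) : Prop :=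
  Traversable B g n ∧ ∀ i ≤ n, 0 ≤ cGain g C i ∧ cGain g C i ≤ cGain g C n

/-- `P` (with `n` arcs) is descending with respect to the schedule `C`. -/
def DescendingC (B : ℝ) (g C : ℕ → ℝ) (n : ℕ) : Prop :=
  Traversable B g n ∧ ∀ i ≤ n, cGain g C n ≤ cGain g C i ∧ cGain g C i ≤ 0

/-- `P` is monotone with respect to the schedule `C`. -/
def MonotoneC (B : ℝ) (g C : ℕ → ℝ) (n : ℕ) : Prop :=
  AscendingC B g C n ∨ DescendingC B g C n

/-- Ascending with respect to the zero schedule. -/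
def Ascending (B : ℝ) (g : ℕ → ℝ) (n : ℕ) : Prop := AscendingC B g (fun _ => 0) n

/-- Descending with respect to the zero schedule. -/
def Descending (B : ℝ) (g : ℕ → ℝ) (n : ℕ) : Prop := DescendingC B g (fun _ => 0) n

/-- Monotone with respect to the zero schedule. -/
def MonotonePath (B : ℝ) (g : ℕ → ℝ) (n : ℕ) : Prop := Ascending B g n ∨ Descending B g n

/-- The contiguous subpath whose arcs start at arc index `a`. -/
def SubPath (g : ℕ → ℝ) (a : ℕ) : ℕ → ℝ := fun t => g (a + t)

/-- Restriction of a charge drop schedule to the subpath starting at vertex `a`: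
no drop at the subpath's first vertex. -/
def restrict (C : ℕ → ℝ) (a : ℕ) : ℕ → ℝ := fun t => if t = 0 then 0 else C (a + t)

/-- First-arc-bounded with respect to a schedule `C` (no drop at the second vertex,
and all vertex gains lie between the gains of the first two vertices). -/
def FirstArcBoundedC (g C : ℕ → ℝ) (n : ℕ) : Prop :=
  C 1 = 0 ∧
    ((0 ≤ g 0 ∧ ∀ i ≤ n, 0 ≤ cGain g C i ∧ cGain g C i ≤ g 0) ∨
     (g 0 ≤ 0 ∧ ∀ i ≤ n, g 0 ≤ cGain g C i ∧ cGain g C i ≤ 0))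

/-- Last-arc-bounded with respect to a schedule `C` (no drops at the last two vertices,
and all vertex gains lie between the gains of the last two vertices). -/
def LastArcBoundedC (g C : ℕ → ℝ) (n : ℕ) : Prop :=
  C (n - 1) = 0 ∧ C n = 0 ∧
    ((0 ≤ g (n - 1) ∧ ∀ i ≤ n, cGain g C (n - 1) ≤ cGain g C i ∧ cGain g C i ≤ cGain g C n) ∨
     (g (n - 1) < 0 ∧ ∀ i ≤ n, cGain g C n ≤ cGain g C i ∧ cGain g C i ≤ cGain g C (n - 1)))

/-- First-arc-bounded (zero schedule). -/
def FirstArcBounded (g : ℕ → ℝ) (n : ℕ) : Prop := FirstArcBoundedC g (fun _ => 0) n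

/-- Last-arc-bounded (zero schedule). -/
def LastArcBounded (g : ℕ → ℝ) (n : ℕ) : Prop := LastArcBoundedC g (fun _ => 0) n

/-- Arc-bounded: first- or last-arc-bounded. -/
def ArcBounded (g : ℕ → ℝ) (n : ℕ) : Prop := FirstArcBounded g n ∨ LastArcBounded g n

/-- A funnel: arc-bounded and containing no monotone subpath of 2 or 3 consecutive arcs. -/
def Funnel (B : ℝ) (g : ℕ → ℝ) (n : ℕ) : Prop :=
  ArcBounded g n ∧ ∀ a m, (m = 2 ∨ m = 3) → a + m ≤ n → ¬ MonotonePath B (SubPath g a) m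

/-- `j = s̄(i)`: the maximal index `j ≥ i` (among arcs of a path with `n` arcs) such that
the subpath of arcs `i,…,j` is first-arc-bounded. -/
def IsSbar (g : ℕ → ℝ) (n i j : ℕ) : Prop :=
  i ≤ j ∧ j < n ∧ FirstArcBounded (SubPath g i) (j - i + 1) ∧
    ∀ j', i ≤ j' → j' < n → FirstArcBounded (SubPath g i) (j' - i + 1) → j' ≤ j

/-- `j = s̲(i)`: the minimal index `j ≤ i` such that the subpath of arcs `j,…,i`
is last-arc-bounded. -/
def IsSlow (g : ℕ → ℝ) (n i j : ℕ) : Prop :=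
  j ≤ i ∧ i < n ∧ LastArcBounded (SubPath g j) (i - j + 1) ∧
    ∀ j', j' ≤ i → LastArcBounded (SubPath g j') (i - j' + 1) → j ≤ j'

/-- Arc gains of the walk around a cycle with `m` arc gains `g`, starting at vertex `a`. -/
def cyc (g : ℕ → ℝ) (m a : ℕ) : ℕ → ℝ := fun t => g ((a + t) % m)

/-- A walk of length `ℓ` from `x` to `y` in the directed graph with arc relation `A`. -/
def IsWalk {V : Type*} (A : V → V → Prop) (w : ℕ → V) (ℓ : ℕ) (x y : V) : Prop :=
  w 0 = x ∧ w ℓ = y ∧ ∀ t < ℓ, A (w t) (w (t + 1))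

/-- The sequence of arc gains induced by a walk `w` in a graph with gain function `g`. -/
def walkGains {V : Type*} (g : V → V → ℝ) (w : ℕ → V) : ℕ → ℝ :=
  fun t => g (w t) (w (t + 1))

/- ===== Auxiliary lemmas ===== -/

lemma cGain_zero (f : ℕ → ℝ) (t : ℕ) : cGain f (fun _ => 0) t = vGain f t := by
  simp [cGain]

lemma vGain_succ (g : ℕ → ℝ) (r : ℕ) : vGain g (r + 1) = vGain g r + g r :=
  Finset.sum_range_succ g r

lemma vGain_subPath (g : ℕ → ℝ) (a t : ℕ) :
    vGain (SubPath g a) t = vGain g (a + t) - vGain g a := by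
  unfold vGain SubPath
  rw [Finset.sum_range_add]
  ring

/-- Global form of first-arc-boundedness for the subpath of arcs `i..j`. -/
def FABg (g : ℕ → ℝ) (i j : ℕ) : Prop :=
  (0 ≤ g i ∧ ∀ r, i ≤ r → r ≤ j + 1 →
      0 ≤ vGain g r - vGain g i ∧ vGain g r - vGain g i ≤ g i) ∨
  (g i ≤ 0 ∧ ∀ r, i ≤ r → r ≤ j + 1 →
      g i ≤ vGain g r - vGain g i ∧ vGain g r - vGain g i ≤ 0)

lemma fab_iff (g : ℕ → ℝ) (i j : ℕ) (h : i ≤ j) :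
    FirstArcBounded (SubPath g i) (j - i + 1) ↔ FABg g i j := by
  unfold FirstArcBounded FirstArcBoundedC FABg
  have h0 : SubPath g i 0 = g i := by simp [SubPath]
  simp only [cGain_zero, vGain_subPath, h0]
  constructor
  · rintro ⟨-, ⟨h1, H⟩ | ⟨h1, H⟩⟩
    · left
      refine ⟨h1, fun r hr hr' => ?_⟩
      have := H (r - i) (by omega)
      rwa [show i + (r - i) = r by omega] at this
    · right
      refine ⟨h1, fun r hr hr' => ?_⟩
      have := H (r - i) (by omega)
      rwa [show i + (r - i) = r by omega] at this
  · rintro (⟨h1, H⟩ | ⟨h1, H⟩)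
    · exact ⟨trivial, Or.inl ⟨h1, fun t ht => H (i + t) (by omega) (by omega)⟩⟩
    · exact ⟨trivial, Or.inr ⟨h1, fun t ht => H (i + t) (by omega) (by omega)⟩⟩

lemma fab_extend (g : ℕ → ℝ) {i₁ j₁ i₂ j₂ : ℕ}
    (hii : i₁ ≤ i₂) (hij : i₂ ≤ j₁)
    (F1 : FABg g i₁ j₁) (F2 : FABg g i₂ j₂) : FABg g i₁ j₂ := by
  have hsucc : vGain g (i₂ + 1) = vGain g i₂ + g i₂ := vGain_succ g i₂
  rcases F1 with ⟨hg1, H1⟩ | ⟨hg1, H1⟩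
  · left
    refine ⟨hg1, fun r hr hr' => ?_⟩
    by_cases hc : r ≤ j₁ + 1
    · exact H1 r hr hc
    · have hr2 : i₂ ≤ r := by omega
      have hA := H1 i₂ hii (by omega)
      have hB := H1 (i₂ + 1) (by omega) (by omega)
      rcases F2 with ⟨hg2, H2⟩ | ⟨hg2, H2⟩ <;>
        · have hC := H2 r hr2 hr'
          constructor <;> linarith
  · right
    refine ⟨hg1, fun r hr hr' => ?_⟩
    by_cases hc : r ≤ j₁ + 1
    · exact H1 r hr hc
    · have hr2 : i₂ ≤ r := by omega
      have hA := H1 i₂ hii (by omega)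
      have hB := H1 (i₂ + 1) (by omega) (by omega)
      rcases F2 with ⟨hg2, H2⟩ | ⟨hg2, H2⟩ <;>
        · have hC := H2 r hr2 hr'
          constructor <;> linarith

/-- Global form of last-arc-boundedness for the subpath of arcs `j..i`. -/
def LABg (g : ℕ → ℝ) (j i : ℕ) : Prop :=
  (0 ≤ g i ∧ ∀ r, j ≤ r → r ≤ i + 1 →
      vGain g i ≤ vGain g r ∧ vGain g r ≤ vGain g (i + 1)) ∨
  (g i < 0 ∧ ∀ r, j ≤ r → r ≤ i + 1 →
      vGain g (i + 1) ≤ vGain g r ∧ vGain g r ≤ vGain g i)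

lemma lab_iff (g : ℕ → ℝ) (j i : ℕ) (h : j ≤ i) :
    LastArcBounded (SubPath g j) (i - j + 1) ↔ LABg g j i := by
  unfold LastArcBounded LastArcBoundedC LABg
  have hn1 : i - j + 1 - 1 = i - j := by omega
  have h0 : SubPath g j (i - j) = g i := by
    simp only [SubPath]; congr 1; omega
  have h1 : j + (i - j) = i := by omega
  have h2 : j + (i - j + 1) = i + 1 := by omega
  simp only [cGain_zero, vGain_subPath, hn1, h0, h1, h2]
  constructor
  · rintro ⟨-, -, ⟨hs, H⟩ | ⟨hs, H⟩⟩
    · left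
      refine ⟨hs, fun r hr hr' => ?_⟩
      have := H (r - j) (by omega)
      rw [show j + (r - j) = r by omega] at this
      constructor <;> linarith [this.1, this.2]
    · right
      refine ⟨hs, fun r hr hr' => ?_⟩
      have := H (r - j) (by omega)
      rw [show j + (r - j) = r by omega] at this
      constructor <;> linarith [this.1, this.2]
  · rintro (⟨hs, H⟩ | ⟨hs, H⟩)
    · refine ⟨trivial, trivial, Or.inl ⟨hs, fun t ht => ?_⟩⟩
      have := H (j + t) (by omega) (by omega)
      constructor <;> linarith [this.1, this.2]
    · refine ⟨trivial, trivial, Or.inr ⟨hs, fun t ht => ?_⟩⟩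
      have := H (j + t) (by omega) (by omega)
      constructor <;> linarith [this.1, this.2]

lemma lab_extend (g : ℕ → ℝ) {j₁ i₁ j₂ i₂ : ℕ}
    (_hjj : j₁ ≤ j₂) (hji : j₂ ≤ i₁) (hii : i₁ ≤ i₂)
    (L1 : LABg g j₁ i₁) (L2 : LABg g j₂ i₂) : LABg g j₁ i₂ := by
  rcases L2 with ⟨hg2, H2⟩ | ⟨hg2, H2⟩
  · left
    refine ⟨hg2, fun r hr hr' => ?_⟩
    by_cases hc : j₂ ≤ r
    · exact H2 r hc hr'
    · have hA := H2 i₁ hji (by omega)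
      have hB := H2 (i₁ + 1) (by omega) (by omega)
      rcases L1 with ⟨hg1, H1⟩ | ⟨hg1, H1⟩ <;>
        · have hC := H1 r hr (by omega)
          constructor <;> linarith
  · right
    refine ⟨hg2, fun r hr hr' => ?_⟩
    by_cases hc : j₂ ≤ r
    · exact H2 r hc hr'
    · have hA := H2 i₁ hji (by omega)
      have hB := H2 (i₁ + 1) (by omega) (by omega)
      rcases L1 with ⟨hg1, H1⟩ | ⟨hg1, H1⟩ <;>
        · have hC := H1 r hr (by omega)
          constructor <;> linarith

lemma sbar_cross (g : ℕ → ℝ) (n : ℕ) {i₁ j₁ i₂ j₂ : ℕ}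
    (h1 : IsSbar g n i₁ j₁) (h2 : IsSbar g n i₂ j₂)
    (hii : i₁ ≤ i₂) (hij : i₂ ≤ j₁) : j₂ ≤ j₁ := by
  obtain ⟨le1, lt1, F1, max1⟩ := h1
  obtain ⟨le2, lt2, F2, max2⟩ := h2
  rw [fab_iff g i₁ j₁ le1] at F1
  rw [fab_iff g i₂ j₂ le2] at F2
  have hext : FABg g i₁ j₂ := fab_extend g hii hij F1 F2
  exact max1 j₂ (by omega) lt2 ((fab_iff g i₁ j₂ (by omega)).2 hext)

lemma slow_cross (g : ℕ → ℝ) (n : ℕ) {i₁ j₁ i₂ j₂ : ℕ}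
    (h1 : IsSlow g n i₁ j₁) (h2 : IsSlow g n i₂ j₂)
    (hii : i₁ ≤ i₂) (hji : j₂ ≤ i₁) : j₂ ≤ j₁ := by
  by_contra hcon
  push_neg at hcon
  obtain ⟨le1, lt1, L1, min1⟩ := h1
  obtain ⟨le2, lt2, L2, min2⟩ := h2
  rw [lab_iff g j₁ i₁ le1] at L1
  rw [lab_iff g j₂ i₂ le2] at L2
  have hext : LABg g j₁ i₂ := lab_extend g (by omega) hji hii L1 L2
  have := min2 j₁ (by omega) ((lab_iff g j₁ i₂ (by omega)).2 hext)
  omega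

/-- For a path given by its arc sequence `e_0 … e_{n-1}`, the family of
intervals `[i, s̄(i)]` is laminar, and the family `[s̲(i), i]` is laminar: any two members
are disjoint or nested. -/
theorem laminar_intervals (g : ℕ → ℝ) (n : ℕ) :
    (∀ i₁ j₁ i₂ j₂, IsSbar g n i₁ j₁ → IsSbar g n i₂ j₂ →
      (Set.Icc i₁ j₁ ∩ Set.Icc i₂ j₂ = ∅ ∨
        Set.Icc i₁ j₁ ⊆ Set.Icc i₂ j₂ ∨ Set.Icc i₂ j₂ ⊆ Set.Icc i₁ j₁)) ∧
    (∀ i₁ j₁ i₂ j₂, IsSlow g n i₁ j₁ → IsSlow g n i₂ j₂ →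
      (Set.Icc j₁ i₁ ∩ Set.Icc j₂ i₂ = ∅ ∨
        Set.Icc j₁ i₁ ⊆ Set.Icc j₂ i₂ ∨ Set.Icc j₂ i₂ ⊆ Set.Icc j₁ i₁)) := by
  constructor
  · intro i₁ j₁ i₂ j₂ h1 h2
    by_cases hov : max i₁ i₂ ≤ min j₁ j₂
    · right
      rcases le_total i₁ i₂ with h | h
      · right
        exact Set.Icc_subset_Icc h (sbar_cross g n h1 h2 h (by omega))
      · left
        exact Set.Icc_subset_Icc h (sbar_cross g n h2 h1 h (by omega))
    · left
      rw [Set.Icc_inter_Icc]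
      apply Set.Icc_eq_empty
      simp only [le_inf_iff, sup_le_iff, not_and, not_le] at hov ⊢
      omega
  · intro i₁ j₁ i₂ j₂ h1 h2
    by_cases hov : max j₁ j₂ ≤ min i₁ i₂
    · right
      rcases le_total i₁ i₂ with h | h
      · left
        exact Set.Icc_subset_Icc (slow_cross g n h1 h2 h (by omega)) h
      · right
        exact Set.Icc_subset_Icc (slow_cross g n h2 h1 h (by omega)) h
    · left
      rw [Set.Icc_inter_Icc]
      apply Set.Icc_eq_empty
      simp only [le_inf_iff, sup_le_iff, not_and, not_le] at hov ⊢
      omega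

end

end EV
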